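/- arXiv:2010.06162 — 2 statements merged into one kernel-verified Lean document; each statement's English description precedes it below -/
import Mathlib

section
/- Sliding a tie endpoint up across a positive crossing (relation (i) of the generalized-tie relations): for every n ≥ 2 and all indices 1 ≤ i and i+1 < j ≤ n, the equality σ_i η_{i,j} = η_{i+1,j} σ_i holds in the tied braid monoid TM_n. -/
/-!
The tied braid monoid `TM n` (n ≥ 2), presented by generators
σ_1,…,σ_{n−1}, σ_1⁻¹,…,σ_{n−1}⁻¹, η_1,…,η_{n−1} subject to the relations:
σ_i σ_i⁻¹ = σ_i⁻¹ σ_i = 1; σ_i σ_{i+1} σ_i = σ_{i+1} σ_i σ_{i+1};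
σ_i σ_j = σ_j σ_i for |i−j| ≥ 2; η_i η_j = η_j η_i for all i, j;
η_i σ_i = σ_i η_i; η_i σ_j = σ_j η_i for |i−j| ≥ 2;
η_i σ_j σ_i^ε = σ_j σ_i^ε η_j for |i−j| = 1, ε = ±1;
η_i η_j σ_i = η_j σ_i η_j = σ_i η_i η_j for |i−j| = 1; η_i² = η_i.
-/

/-- Generators of the tied braid monoid: σ_i, σ_i⁻¹ and η_i for 1 ≤ i ≤ n−1. -/
inductive TMGen (n : ℕ) : Type
  | sig (i : ℕ) (h : 1 ≤ i ∧ i ≤ n - 1) : TMGen n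
  | sigInv (i : ℕ) (h : 1 ≤ i ∧ i ≤ n - 1) : TMGen n
  | eta (i : ℕ) (h : 1 ≤ i ∧ i ≤ n - 1) : TMGen n

/-- The word σ_i in the free monoid on the generators. -/
def wS (n i : ℕ) : FreeMonoid (TMGen n) :=
  if h : 1 ≤ i ∧ i ≤ n - 1 then FreeMonoid.of (TMGen.sig i h) else 1

/-- The word σ_i⁻¹ in the free monoid on the generators. -/
def wSI (n i : ℕ) : FreeMonoid (TMGen n) :=
  if h : 1 ≤ i ∧ i ≤ n - 1 then FreeMonoid.of (TMGen.sigInv i h) else 1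

/-- The word η_i in the free monoid on the generators. -/
def wE (n i : ℕ) : FreeMonoid (TMGen n) :=
  if h : 1 ≤ i ∧ i ≤ n - 1 then FreeMonoid.of (TMGen.eta i h) else 1

/-- The defining relations of the tied braid monoid `TM n`. -/
inductive TMRel (n : ℕ) : FreeMonoid (TMGen n) → FreeMonoid (TMGen n) → Prop
  | inv_right (i : ℕ) (h : 1 ≤ i ∧ i ≤ n - 1) :
      TMRel n (wS n i * wSI n i) 1
  | inv_left (i : ℕ) (h : 1 ≤ i ∧ i ≤ n - 1) :
      TMRel n (wSI n i * wS n i) 1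
  | braid (i : ℕ) (h : 1 ≤ i ∧ i + 1 ≤ n - 1) :
      TMRel n (wS n i * wS n (i+1) * wS n i) (wS n (i+1) * wS n i * wS n (i+1))
  | sig_comm (i j : ℕ) (hi : 1 ≤ i ∧ i ≤ n - 1) (hj : 1 ≤ j ∧ j ≤ n - 1)
      (hij : i + 2 ≤ j ∨ j + 2 ≤ i) :
      TMRel n (wS n i * wS n j) (wS n j * wS n i)
  | eta_comm (i j : ℕ) (hi : 1 ≤ i ∧ i ≤ n - 1) (hj : 1 ≤ j ∧ j ≤ n - 1) :
      TMRel n (wE n i * wE n j) (wE n j * wE n i)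
  | eta_sig (i : ℕ) (h : 1 ≤ i ∧ i ≤ n - 1) :
      TMRel n (wE n i * wS n i) (wS n i * wE n i)
  | eta_sig_far (i j : ℕ) (hi : 1 ≤ i ∧ i ≤ n - 1) (hj : 1 ≤ j ∧ j ≤ n - 1)
      (hij : i + 2 ≤ j ∨ j + 2 ≤ i) :
      TMRel n (wE n i * wS n j) (wS n j * wE n i)
  | eta_slide_pos (i j : ℕ) (hi : 1 ≤ i ∧ i ≤ n - 1) (hj : 1 ≤ j ∧ j ≤ n - 1)
      (hij : j = i + 1 ∨ i = j + 1) :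
      TMRel n (wE n i * wS n j * wS n i) (wS n j * wS n i * wE n j)
  | eta_slide_neg (i j : ℕ) (hi : 1 ≤ i ∧ i ≤ n - 1) (hj : 1 ≤ j ∧ j ≤ n - 1)
      (hij : j = i + 1 ∨ i = j + 1) :
      TMRel n (wE n i * wS n j * wSI n i) (wS n j * wSI n i * wE n j)
  | eta_eta_sig₁ (i j : ℕ) (hi : 1 ≤ i ∧ i ≤ n - 1) (hj : 1 ≤ j ∧ j ≤ n - 1)
      (hij : j = i + 1 ∨ i = j + 1) :
      TMRel n (wE n i * wE n j * wS n i) (wE n j * wS n i * wE n j)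
  | eta_eta_sig₂ (i j : ℕ) (hi : 1 ≤ i ∧ i ≤ n - 1) (hj : 1 ≤ j ∧ j ≤ n - 1)
      (hij : j = i + 1 ∨ i = j + 1) :
      TMRel n (wE n j * wS n i * wE n j) (wS n i * wE n i * wE n j)
  | eta_idem (i : ℕ) (h : 1 ≤ i ∧ i ≤ n - 1) :
      TMRel n (wE n i * wE n i) (wE n i)

/-- The tied braid monoid `TM n`: the quotient of the free monoid on the
generators by the congruence generated by the defining relations. -/
def TM (n : ℕ) := (conGen (TMRel n)).Quotient

instance (n : ℕ) : Monoid (TM n) :=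
  inferInstanceAs (Monoid ((conGen (TMRel n)).Quotient))

/-- The generator σ_i of `TM n` (defined for 1 ≤ i ≤ n−1; junk value 1 otherwise). -/
def TM.s (n i : ℕ) : TM n := (conGen (TMRel n)).mk' (wS n i)

/-- The generator σ_i⁻¹ of `TM n` (defined for 1 ≤ i ≤ n−1; junk value 1 otherwise). -/
def TM.sInv (n i : ℕ) : TM n := (conGen (TMRel n)).mk' (wSI n i)

/-- The generator η_i of `TM n` (defined for 1 ≤ i ≤ n−1; junk value 1 otherwise). -/
def TM.e (n i : ℕ) : TM n := (conGen (TMRel n)).mk' (wE n i)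

/-- The generalized tie η_{i,j} = σ_i σ_{i+1} ⋯ σ_{j−2} η_{j−1} σ_{j−2}⁻¹ ⋯ σ_{i+1}⁻¹ σ_i⁻¹,
for 1 ≤ i < j ≤ n (in particular η_{i,i+1} = η_i). -/
def TM.genTie (n i j : ℕ) : TM n :=
  (((List.range' i (j - 1 - i)).map (TM.s n)).prod) * TM.e n (j - 1) *
    (((List.range' i (j - 1 - i)).reverse.map (TM.sInv n)).prod)


section Aux

variable {n : ℕ}

private lemma rel_eq {x y : FreeMonoid (TMGen n)} (h : TMRel n x y) :
    (conGen (TMRel n)).mk' x = (conGen (TMRel n)).mk' y :=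
  (Con.eq _).mpr (ConGen.Rel.of x y h)

private lemma s_sInv {i : ℕ} (h : 1 ≤ i ∧ i ≤ n - 1) : TM.s n i * TM.sInv n i = 1 := by
  have h1 := rel_eq (TMRel.inv_right i h)
  simp only [map_mul, map_one] at h1
  exact h1

private lemma sInv_s {i : ℕ} (h : 1 ≤ i ∧ i ≤ n - 1) : TM.sInv n i * TM.s n i = 1 := by
  have h1 := rel_eq (TMRel.inv_left i h)
  simp only [map_mul, map_one] at h1
  exact h1

private lemma braid_rel {i : ℕ} (h : 1 ≤ i ∧ i + 1 ≤ n - 1) :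
    TM.s n i * TM.s n (i+1) * TM.s n i = TM.s n (i+1) * TM.s n i * TM.s n (i+1) := by
  have h1 := rel_eq (TMRel.braid i h)
  simp only [map_mul] at h1
  exact h1

private lemma s_comm_far {i j : ℕ} (hi : 1 ≤ i ∧ i ≤ n - 1) (hj : 1 ≤ j ∧ j ≤ n - 1)
    (hij : i + 2 ≤ j ∨ j + 2 ≤ i) : TM.s n i * TM.s n j = TM.s n j * TM.s n i := by
  have h1 := rel_eq (TMRel.sig_comm i j hi hj hij)
  simp only [map_mul] at h1
  exact h1

private lemma e_s_far {i j : ℕ} (hi : 1 ≤ i ∧ i ≤ n - 1) (hj : 1 ≤ j ∧ j ≤ n - 1)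
    (hij : i + 2 ≤ j ∨ j + 2 ≤ i) : TM.e n i * TM.s n j = TM.s n j * TM.e n i := by
  have h1 := rel_eq (TMRel.eta_sig_far i j hi hj hij)
  simp only [map_mul] at h1
  exact h1

private lemma slide_pos {i j : ℕ} (hi : 1 ≤ i ∧ i ≤ n - 1) (hj : 1 ≤ j ∧ j ≤ n - 1)
    (hij : j = i + 1 ∨ i = j + 1) :
    TM.e n i * TM.s n j * TM.s n i = TM.s n j * TM.s n i * TM.e n j := by
  have h1 := rel_eq (TMRel.eta_slide_pos i j hi hj hij)
  simp only [map_mul] at h1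
  exact h1

private lemma slide_neg {i j : ℕ} (hi : 1 ≤ i ∧ i ≤ n - 1) (hj : 1 ≤ j ∧ j ≤ n - 1)
    (hij : j = i + 1 ∨ i = j + 1) :
    TM.e n i * TM.s n j * TM.sInv n i = TM.s n j * TM.sInv n i * TM.e n j := by
  have h1 := rel_eq (TMRel.eta_slide_neg i j hi hj hij)
  simp only [map_mul] at h1
  exact h1

private lemma commute_inv {x b c : TM n} (h : Commute x b) (h1 : b * c = 1) (h2 : c * b = 1) :
    Commute x c := by
  have h3 : x * c = c * x := by
    calc x * c = c * b * (x * c) := by rw [h2, one_mul]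
      _ = c * (b * x) * c := by simp only [mul_assoc]
      _ = c * (x * b) * c := by rw [← h.eq]
      _ = c * x * (b * c) := by simp only [mul_assoc]
      _ = c * x := by rw [h1, mul_one]
  exact h3

private lemma genTie_self (i : ℕ) : TM.genTie n i (i + 1) = TM.e n i := by
  simp [TM.genTie]

private lemma genTie_cons {i j : ℕ} (hij : i + 2 ≤ j) :
    TM.genTie n i j = TM.s n i * TM.genTie n (i + 1) j * TM.sInv n i := by
  have hd : j - 1 - i = (j - 1 - (i + 1)) + 1 := by omega
  unfold TM.genTie
  rw [hd, List.range'_succ]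
  simp only [List.map_cons, List.prod_cons, List.reverse_cons, List.map_append,
    List.prod_append, List.map_nil, List.prod_nil, mul_one]
  simp only [mul_assoc]

private lemma commute_s_genTie {k a b : ℕ} (hk : 1 ≤ k) (hka : k + 2 ≤ a) (hab : a < b)
    (hbn : b ≤ n) : Commute (TM.s n k) (TM.genTie n a b) := by
  have hkn : k ≤ n - 1 := by omega
  have hmem : ∀ m ∈ List.range' a (b - 1 - a),
      Commute (TM.s n k) (TM.s n m) ∧ Commute (TM.s n k) (TM.sInv n m) := by
    intro m hm
    rw [List.mem_range'] at hm
    obtain ⟨t, ht, rfl⟩ := hm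
    have h1 : 1 ≤ a + 1 * t ∧ a + 1 * t ≤ n - 1 := ⟨by omega, by omega⟩
    have hcs : Commute (TM.s n k) (TM.s n (a + 1 * t)) :=
      s_comm_far ⟨hk, hkn⟩ h1 (Or.inl (by omega))
    exact ⟨hcs, commute_inv hcs (s_sInv h1) (sInv_s h1)⟩
  unfold TM.genTie
  refine Commute.mul_right (Commute.mul_right ?_ ?_) ?_
  · refine Commute.list_prod_right _ _ (fun x hx => ?_)
    obtain ⟨m, hm, rfl⟩ := List.mem_map.mp hx
    exact (hmem m hm).1
  · have hb1 : 1 ≤ b - 1 ∧ b - 1 ≤ n - 1 := ⟨by omega, by omega⟩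
    exact (e_s_far hb1 ⟨hk, hkn⟩ (Or.inr (by omega))).symm
  · refine Commute.list_prod_right _ _ (fun x hx => ?_)
    obtain ⟨m, hm, rfl⟩ := List.mem_map.mp hx
    rw [List.mem_reverse] at hm
    exact (hmem m hm).2

private lemma commute_ss_genTie (d : ℕ) : ∀ i j : ℕ, 1 ≤ i → i + 2 ≤ j → j ≤ n →
    j - i - 2 ≤ d → Commute (TM.s n i * TM.s n i) (TM.genTie n (i + 1) j) := by
  induction d with
  | zero =>
    intro i j hi hij hj hd
    have hji : j = i + 2 := by omega
    subst hji
    rw [show i + 2 = (i + 1) + 1 by omega, genTie_self]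
    have hi1 : 1 ≤ i ∧ i ≤ n - 1 := ⟨hi, by omega⟩
    have hi2 : 1 ≤ i + 1 ∧ i + 1 ≤ n - 1 := ⟨by omega, by omega⟩
    set a := TM.s n i with ha
    set b := TM.s n (i+1) with hb
    set c := TM.sInv n (i+1) with hc
    set d := TM.e n (i+1) with hdd
    set ei := TM.e n i with hei
    have R1 : ei * b * a = b * a * d := slide_pos hi1 hi2 (Or.inl rfl)
    have R2 : d * a * c = a * c * ei := slide_neg hi2 hi1 (Or.inr rfl)
    have SS : c * b = 1 := sInv_s hi2
    have key : d * (a * a) = a * a * d := by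
      calc d * (a * a) = d * a * a := by simp only [mul_assoc]
        _ = d * a * (c * b) * a := by rw [SS, mul_one]
        _ = (d * a * c) * (b * a) := by simp only [mul_assoc]
        _ = (a * c * ei) * (b * a) := by rw [R2]
        _ = a * c * (ei * b * a) := by simp only [mul_assoc]
        _ = a * c * (b * a * d) := by rw [R1]
        _ = a * (c * b) * (a * d) := by simp only [mul_assoc]
        _ = a * a * d := by rw [SS, mul_one, mul_assoc]
    exact key.symm
  | succ d ih =>
    intro i j hi hij hj hd
    rcases Nat.lt_or_ge (j - i - 2) (d + 1) with hlt | hge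
    · exact ih i j hi hij hj (by omega)
    have hij3 : i + 3 ≤ j := by omega
    rw [genTie_cons (show (i + 1) + 2 ≤ j by omega)]
    have hi1 : 1 ≤ i ∧ i ≤ n - 1 := ⟨hi, by omega⟩
    have hi2 : 1 ≤ i + 1 ∧ i + 1 ≤ n - 1 := ⟨by omega, by omega⟩
    set a := TM.s n i with ha
    set b := TM.s n (i+1) with hb
    set aI := TM.sInv n i with haI
    set c := TM.sInv n (i+1) with hc
    set Y := TM.genTie n (i + 1 + 1) j with hY
    have Br : a * b * a = b * a * b := braid_rel ⟨hi, by omega⟩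
    have haa : a * aI = 1 := s_sInv hi1
    have hIa : aI * a = 1 := sInv_s hi1
    have hbc : b * c = 1 := s_sInv hi2
    have hcb : c * b = 1 := sInv_s hi2
    have hYa : a * Y = Y * a :=
      (commute_s_genTie hi (by omega) (by omega) hj : Commute a Y).eq
    have hYI : aI * Y = Y * aI :=
      ((commute_inv ((commute_s_genTie hi (by omega) (by omega) hj :
        Commute a Y).symm) haa hIa).symm).eq
    have hbbY : (b * b) * Y = Y * (b * b) :=
      (ih (i + 1) j (by omega) (by omega) hj (by omega)).eq
    have K : a * b * aI = c * a * b := by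
      calc a * b * aI = c * b * (a * b * aI) := by rw [hcb, one_mul]
        _ = c * (b * a * b) * aI := by simp only [mul_assoc]
        _ = c * (a * b * a) * aI := by rw [← Br]
        _ = c * a * b * (a * aI) := by simp only [mul_assoc]
        _ = c * a * b := by rw [haa, mul_one]
    have E1 : a * a * b = b * a * (b * b) * aI := by
      symm
      calc b * a * (b * b) * aI = (b * a * b) * (b * aI) := by simp only [mul_assoc]
        _ = (a * b * a) * (b * aI) := by rw [← Br]
        _ = a * b * (a * b * aI) := by simp only [mul_assoc]
        _ = a * b * (c * a * b) := by rw [K]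
        _ = a * (b * c) * (a * b) := by simp only [mul_assoc]
        _ = a * a * b := by rw [hbc, mul_one, ← mul_assoc]
    have E2 : a * (b * b) * aI * c = c * (a * a) := by
      calc a * (b * b) * aI * c = a * b * b * aI * c := by simp only [mul_assoc]
        _ = a * b * (aI * a) * b * aI * c := by rw [hIa, mul_one]
        _ = (a * b * aI) * (a * b * aI) * c := by simp only [mul_assoc]
        _ = (c * a * b) * (c * a * b) * c := by rw [K]
        _ = c * a * (b * c) * (a * (b * c)) := by simp only [mul_assoc]
        _ = c * (a * a) := by rw [hbc, mul_one, mul_one, mul_assoc]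
    show (a * a) * (b * Y * c) = (b * Y * c) * (a * a)
    calc (a * a) * (b * Y * c) = (a * a * b) * Y * c := by simp only [mul_assoc]
      _ = (b * a * (b * b) * aI) * Y * c := by rw [E1]
      _ = b * a * (b * b) * (aI * Y) * c := by simp only [mul_assoc]
      _ = b * a * (b * b) * (Y * aI) * c := by rw [hYI]
      _ = b * a * ((b * b) * Y) * (aI * c) := by simp only [mul_assoc]
      _ = b * a * (Y * (b * b)) * (aI * c) := by rw [hbbY]
      _ = b * (a * Y) * ((b * b) * (aI * c)) := by simp only [mul_assoc]
      _ = b * (Y * a) * ((b * b) * (aI * c)) := by rw [hYa]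
      _ = (b * Y) * (a * (b * b) * aI * c) := by simp only [mul_assoc]
      _ = (b * Y) * (c * (a * a)) := by rw [E2]
      _ = (b * Y * c) * (a * a) := by simp only [mul_assoc]

end Aux

/-- **Relation (i) of the generalized-tie relations**: for every n ≥ 2 and indices
1 ≤ i with i+1 < j ≤ n, σ_i η_{i,j} = η_{i+1,j} σ_i holds in `TM n`. -/
theorem tm_genTie_rel_i (n : ℕ) (hn : 2 ≤ n) (i j : ℕ)
    (hi : 1 ≤ i) (hij : i + 1 < j) (hj : j ≤ n) :
    TM.s n i * TM.genTie n i j = TM.genTie n (i + 1) j * TM.s n i := by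
  rw [genTie_cons hij]
  have hc : Commute (TM.s n i * TM.s n i) (TM.genTie n (i + 1) j) :=
    commute_ss_genTie j i j hi hij hj (by omega)
  have hi1 : 1 ≤ i ∧ i ≤ n - 1 := ⟨hi, by omega⟩
  calc TM.s n i * (TM.s n i * TM.genTie n (i + 1) j * TM.sInv n i)
      = (TM.s n i * TM.s n i) * TM.genTie n (i + 1) j * TM.sInv n i := by
        simp only [mul_assoc]
    _ = TM.genTie n (i + 1) j * (TM.s n i * TM.s n i) * TM.sInv n i := by rw [hc.eq]
    _ = TM.genTie n (i + 1) j * (TM.s n i * (TM.s n i * TM.sInv n i)) := by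
        simp only [mul_assoc]
    _ = TM.genTie n (i + 1) j * TM.s n i := by rw [s_sInv hi1, mul_one]
end

section
/- Relation (iii) of the generalized-tie relations: for every n ≥ 2 and all indices 2 ≤ i < j ≤ n, the equality σ_{i−1} η_{i,j} = η_{i−1,j} σ_{i−1} holds in the tied braid monoid TM_n. -/
lemma tm_sInv_mul_s (n k : ℕ) (h : 1 ≤ k ∧ k ≤ n - 1) :
    TM.sInv n k * TM.s n k = 1 := by
  show (conGen (TMRel n)).mk' (wSI n k) * (conGen (TMRel n)).mk' (wS n k) = 1
  rw [← MonoidHom.map_mul, show (1 : (conGen (TMRel n)).Quotient) = (conGen (TMRel n)).mk' 1 from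
    (MonoidHom.map_one _).symm]
  exact (Con.eq _).2 (ConGen.Rel.of _ _ (TMRel.inv_left k h))

/-- **Relation (iii) of the generalized-tie relations**: for every n ≥ 2 and indices
2 ≤ i < j ≤ n, σ_{i−1} η_{i,j} = η_{i−1,j} σ_{i−1} holds in `TM n`. -/
theorem tm_genTie_rel_iii (n : ℕ) (hn : 2 ≤ n) (i j : ℕ)
    (hi : 2 ≤ i) (hij : i < j) (hj : j ≤ n) :
    TM.s n (i - 1) * TM.genTie n i j = TM.genTie n (i - 1) j * TM.s n (i - 1) := by
  have h1 : j - 1 - (i - 1) = (j - 1 - i) + 1 := by omega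
  have h2 : i - 1 + 1 = i := by omega
  have h3 : List.range' (i - 1) (j - 1 - (i - 1)) =
      (i - 1) :: List.range' i (j - 1 - i) := by
    rw [h1, List.range'_succ, h2]
  unfold TM.genTie
  rw [h3]
  simp only [List.map_cons, List.prod_cons, List.reverse_cons, List.map_append,
    List.prod_append, List.map_cons, List.prod_cons, List.map_nil, List.prod_nil,
    mul_one]
  have hinv : TM.sInv n (i - 1) * TM.s n (i - 1) = 1 :=
    tm_sInv_mul_s n (i - 1) ⟨by omega, by omega⟩
  calc TM.s n (i - 1) * ((List.map (TM.s n) (List.range' i (j - 1 - i))).prod *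
        TM.e n (j - 1) *
        (List.map (TM.sInv n) (List.range' i (j - 1 - i)).reverse).prod)
      = TM.s n (i - 1) * (List.map (TM.s n) (List.range' i (j - 1 - i))).prod *
        TM.e n (j - 1) *
        ((List.map (TM.sInv n) (List.range' i (j - 1 - i)).reverse).prod *
          (TM.sInv n (i - 1) * TM.s n (i - 1))) := by
        rw [hinv]; ring_nf; simp [mul_assoc]
    _ = TM.s n (i - 1) * (List.map (TM.s n) (List.range' i (j - 1 - i))).prod *
        TM.e n (j - 1) *
        ((List.map (TM.sInv n) (List.range' i (j - 1 - i)).reverse).prod *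
          TM.sInv n (i - 1)) * TM.s n (i - 1) := by
        simp [mul_assoc]
end
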